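/- arXiv:math/0308104 — 3 statements merged into one kernel-verified Lean document; each statement's English description precedes it below -/
import Mathlib

section
/- Let M ⊆ H²(ℂ^d) ⊗ ℂ^r be a closed invariant subspace for the d-shift of rank r generated by a set of monomials. Then the operator S_1^*S_1 leaves M invariant, and consequently the restriction of (1 − P_M)S_1^* to the closed subspace closure(S_1 M) is zero. -/
open scoped ENNReal

noncomputable section

set_option synthInstance.maxHeartbeats 400000
set_option maxHeartbeats 1000000

namespace Arveson

/-- The `n`-th approximation number of a bounded operator between complex normed spaces:
the distance from `T` to the set of operators of rank at most `n`.  For operators between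
Hilbert spaces this is precisely the `n`-th singular value of `T`. -/
noncomputable def approxNum {H K : Type*} [NormedAddCommGroup H] [NormedSpace ℂ H]
    [NormedAddCommGroup K] [NormedSpace ℂ K] (T : H →L[ℂ] K) (n : ℕ) : ℝ :=
  sInf {c : ℝ | ∃ F : H →L[ℂ] K, Module.rank ℂ (LinearMap.range (F : H →ₗ[ℂ] K)) ≤ n ∧ c = ‖T - F‖}

/-- Membership in the Schatten–von Neumann class `𝓛^p`: the singular value sequence
(= the sequence of approximation numbers) is `p`-summable. -/
def MemSchatten {H K : Type*} [NormedAddCommGroup H] [NormedSpace ℂ H]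
    [NormedAddCommGroup K] [NormedSpace ℂ K] (p : ℝ) (T : H →L[ℂ] K) : Prop :=
  Summable fun n => approxNum T n ^ p

/-- Membership in `𝓛^p` for an extended real exponent `p`, where `𝓛^∞` is interpreted as
the class of compact operators. -/
def MemSchattenE {H K : Type*} [NormedAddCommGroup H] [NormedSpace ℂ H]
    [NormedAddCommGroup K] [NormedSpace ℂ K] (p : ℝ≥0∞) (T : H →L[ℂ] K) : Prop :=
  if p = ∞ then IsCompactOperator T else MemSchatten p.toReal T

/-- The orthogonal projection onto a closed subspace `M`, as an operator `H →L[ℂ] H`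
(junk value `0` if `M` is not closed). -/
noncomputable def orthProjCLM {H : Type*} [NormedAddCommGroup H] [InnerProductSpace ℂ H]
    [CompleteSpace H] (M : Submodule ℂ H) : H →L[ℂ] H :=
  open scoped Classical in
  if h : IsClosed (M : Set H) then
    haveI : CompleteSpace M := h.completeSpace_coe
    M.subtypeL.comp M.orthogonalProjection
  else 0

/-- `‖z^n‖²` in the Drury–Arveson space `H²(ℂ^d)`: `n₁!⋯n_d!/(n₁+⋯+n_d)!`. -/
def daWeight {d : ℕ} (n : Fin d → ℕ) : ℝ :=
  ((∏ i, (n i).factorial : ℕ) : ℝ) / (((∑ i, n i).factorial : ℕ) : ℝ)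

/-- An abstract presentation of the `d`-shift `(S₁,…,S_d)` acting on `H²(ℂ^d) ⊗ E`
(the symmetric Fock space / Drury–Arveson space with coefficients in `E`).
`mono n` sends `ζ : E` to the monomial `z^n ⊗ ζ`; the axioms say that the monomials are
mutually orthogonal with `⟪z^n ⊗ ζ, z^n ⊗ η⟫ = (n₁!⋯n_d!/(n₁+⋯+n_d)!)·⟪ζ, η⟫`, that
they span a dense subspace, and that `S_k (z^n ⊗ ζ) = z^{n+e_k} ⊗ ζ`.  These axioms
determine the `d`-shift of rank `dim E` uniquely up to unitary equivalence. -/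
structure DShift (d : ℕ) (E : Type*) [NormedAddCommGroup E] [InnerProductSpace ℂ E]
    (H : Type*) [NormedAddCommGroup H] [InnerProductSpace ℂ H] where
  mono : (Fin d → ℕ) → E →ₗ[ℂ] H
  S : Fin d → H →L[ℂ] H
  inner_mono : ∀ (n m : Fin d → ℕ) (ζ η : E),
    (inner ℂ (mono n ζ) (mono m η) : ℂ) =
      if n = m then (daWeight n : ℂ) * (inner ℂ ζ η : ℂ) else 0
  total : (Submodule.span ℂ {x : H | ∃ n ζ, x = mono n ζ}).topologicalClosure = ⊤
  shift_mono : ∀ (k : Fin d) (n : Fin d → ℕ) (ζ : E),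
    S k (mono n ζ) = mono (fun i => if i = k then n i + 1 else n i) ζ

variable {d : ℕ} {E : Type*} [NormedAddCommGroup E] [InnerProductSpace ℂ E]
  {H₀ : Type*} [NormedAddCommGroup H₀] [InnerProductSpace ℂ H₀]

/-- `M` is invariant under each of the operators `S₁,…,S_d`. -/
def IsInvariant (D : DShift d E H₀) (M : Submodule ℂ H₀) : Prop :=
  ∀ k : Fin d, ∀ x ∈ M, D.S k x ∈ M

/-- `M` is a closed invariant subspace for the `d`-shift which is generated, as a closed
invariant subspace, by a set `F` of monomials `z^n ⊗ ζ`: that is, `M` is the smallest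
closed invariant subspace containing `F`. -/
def IsMonomialGenerated (D : DShift d E H₀) (M : Submodule ℂ H₀) : Prop :=
  IsClosed (M : Set H₀) ∧ IsInvariant D M ∧
    ∃ F : Set H₀, (∀ f ∈ F, ∃ n ζ, f = D.mono n ζ) ∧ F ⊆ (M : Set H₀) ∧
      ∀ N : Submodule ℂ H₀, IsClosed (N : Set H₀) → IsInvariant D N →
        F ⊆ (N : Set H₀) → M ≤ N

lemma daWeight_pos {d : ℕ} (n : Fin d → ℕ) : 0 < daWeight n := by
  have h1 : 0 < ((∏ i, (n i).factorial : ℕ) : ℝ) := by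
    have : 0 < ∏ i, (n i).factorial := Finset.prod_pos fun i _ => (n i).factorial_pos
    exact_mod_cast this
  have h2 : 0 < (((∑ i, n i).factorial : ℕ) : ℝ) := by
    exact_mod_cast (∑ i, n i).factorial_pos
  exact div_pos h1 h2

lemma monoTotal_eq_zero (D : DShift d E H₀) (y : H₀)
    (h : ∀ n ζ, (inner ℂ y (D.mono n ζ) : ℂ) = 0) : y = 0 := by
  have hset : (Submodule.span ℂ {x : H₀ | ∃ n ζ, x = D.mono n ζ} : Set H₀) ⊆
      {x | (inner ℂ y x : ℂ) = 0} := by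
    intro x hx
    induction hx using Submodule.span_induction with
    | mem x hx => obtain ⟨n, ζ, rfl⟩ := hx; exact h n ζ
    | zero => simp
    | add a b _ _ ha hb => simp only [Set.mem_setOf_eq] at *; rw [inner_add_right, ha, hb]; ring
    | smul c a _ ha => simp only [Set.mem_setOf_eq] at *; rw [inner_smul_right, ha]; ring
  have hclosed : IsClosed {x : H₀ | (inner ℂ y x : ℂ) = 0} := by
    have hc : Continuous fun x : H₀ => (inner ℂ y x : ℂ) :=
      continuous_const.inner continuous_id
    exact isClosed_eq hc continuous_const
  have hmem : y ∈ closure (Submodule.span ℂ {x : H₀ | ∃ n ζ, x = D.mono n ζ} : Set H₀) := by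
    have hy : y ∈ (Submodule.span ℂ {x : H₀ | ∃ n ζ, x = D.mono n ζ}).topologicalClosure := by
      rw [D.total]; trivial
    rwa [← Submodule.topologicalClosure_coe]
  have hy : (inner ℂ y y : ℂ) = 0 := closure_minimal hset hclosed hmem
  exact inner_self_eq_zero.mp hy

lemma adjoint_shift_apply [CompleteSpace H₀] (D : DShift d E H₀) (k : Fin d)
    (n : Fin d → ℕ) (ζ : E) :
    ContinuousLinearMap.adjoint (D.S k) (D.S k (D.mono n ζ)) =
      ((daWeight (fun i => if i = k then n i + 1 else n i) / daWeight n : ℝ) : ℂ) •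
        D.mono n ζ := by
  set c : ℂ := ((daWeight (fun i => if i = k then n i + 1 else n i) / daWeight n : ℝ) : ℂ)
    with hc
  have key : ∀ m η,
      (inner ℂ (ContinuousLinearMap.adjoint (D.S k) (D.S k (D.mono n ζ)) - c • D.mono n ζ)
        (D.mono m η) : ℂ) = 0 := by
    intro m η
    rw [inner_sub_left, ContinuousLinearMap.adjoint_inner_left, D.shift_mono, D.shift_mono,
      D.inner_mono, inner_smul_left, D.inner_mono]
    have hiff : ((fun i => if i = k then n i + 1 else n i) =
        (fun i => if i = k then m i + 1 else m i)) ↔ n = m := by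
      constructor
      · intro hmn
        funext i
        have hi := congrFun hmn i
        by_cases hik : i = k
        · rw [if_pos hik, if_pos hik] at hi; omega
        · rw [if_neg hik, if_neg hik] at hi; exact hi
      · rintro rfl; rfl
    by_cases hmn : n = m
    · subst hmn
      rw [if_pos (hiff.mpr rfl), if_pos rfl, hc, Complex.conj_ofReal]
      have hw : (daWeight n : ℝ) ≠ 0 := ne_of_gt (daWeight_pos n)
      have hcast : ((daWeight (fun i => if i = k then n i + 1 else n i) / daWeight n : ℝ) : ℂ) *
          ((daWeight n : ℝ) : ℂ) =
          ((daWeight (fun i => if i = k then n i + 1 else n i) : ℝ) : ℂ) := by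
        rw [← Complex.ofReal_mul]
        congr 1
        field_simp
      rw [← mul_assoc, hcast]
      ring
    · rw [if_neg (fun hcon => hmn (hiff.mp hcon)), if_neg hmn]
      ring
  have hz : ContinuousLinearMap.adjoint (D.S k) (D.S k (D.mono n ζ)) - c • D.mono n ζ = 0 :=
    monoTotal_eq_zero D _ key
  rw [sub_eq_zero] at hz
  exact hz

lemma mapsTo_topologicalClosure_span {H : Type*} [NormedAddCommGroup H]
    [InnerProductSpace ℂ H] (T : H →L[ℂ] H) (G : Set H)
    (hG : ∀ x ∈ G, T x ∈ Submodule.span ℂ G) :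
    ∀ x ∈ (Submodule.span ℂ G).topologicalClosure,
      T x ∈ (Submodule.span ℂ G).topologicalClosure := by
  intro x hx
  have hspan : ∀ y ∈ Submodule.span ℂ G, T y ∈ Submodule.span ℂ G := by
    intro y hy
    induction hy using Submodule.span_induction with
    | mem y hy => exact hG y hy
    | zero => simp
    | add a b _ _ ha hb => rw [map_add]; exact Submodule.add_mem _ ha hb
    | smul c a _ ha => rw [map_smul]; exact Submodule.smul_mem _ _ ha
  have hx' : x ∈ closure (Submodule.span ℂ G : Set H) := by
    rwa [← Submodule.topologicalClosure_coe]
  have h1 : T x ∈ closure (T '' (Submodule.span ℂ G : Set H)) :=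
    image_closure_subset_closure_image T.continuous ⟨x, hx', rfl⟩
  have hsub : closure (T '' (Submodule.span ℂ G : Set H)) ⊆
      closure (Submodule.span ℂ G : Set H) :=
    closure_mono (by rintro _ ⟨y, hy, rfl⟩; exact hspan y hy)
  have : T x ∈ closure (Submodule.span ℂ G : Set H) := hsub h1
  rwa [← Submodule.topologicalClosure_coe] at this

/-- Let `M` be a closed invariant subspace for the `d`-shift of rank `r`
generated by monomials.  Then `S₁* S₁` leaves `M` invariant, and consequently the
restriction of `(1 − P_M) S₁*` to `closure (S₁ M)` is zero. -/
theorem statement4 {H : Type*} [NormedAddCommGroup H] [InnerProductSpace ℂ H]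
    [CompleteSpace H] (d r : ℕ) (hd : 0 < d) (hr : 0 < r)
    (D : DShift d (EuclideanSpace ℂ (Fin r)) H)
    (M : Submodule ℂ H) (hM : IsMonomialGenerated D M) :
    (∀ x ∈ M, (ContinuousLinearMap.adjoint (D.S ⟨0, hd⟩) * D.S ⟨0, hd⟩) x ∈ M) ∧
      ∀ x ∈ (M.map (D.S ⟨0, hd⟩ : H →ₗ[ℂ] H)).topologicalClosure,
        ((1 - orthProjCLM M) ∘L ContinuousLinearMap.adjoint (D.S ⟨0, hd⟩)) x = 0 := by
  obtain ⟨hMclosed, hMinv, F, hFmono, hFM, hFmin⟩ := hM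
  set k : Fin d := ⟨0, hd⟩ with hk
  set G : Set H := {x | (∃ n ζ, x = D.mono n ζ) ∧ x ∈ M} with hG
  have hGM : G ⊆ (M : Set H) := fun x hx => hx.2
  have hspanM : Submodule.span ℂ G ≤ M := Submodule.span_le.mpr hGM
  have hNM : (Submodule.span ℂ G).topologicalClosure ≤ M :=
    Submodule.topologicalClosure_minimal _ hspanM hMclosed
  have hNinv : IsInvariant D (Submodule.span ℂ G).topologicalClosure := by
    intro j x hx
    refine mapsTo_topologicalClosure_span (D.S j) G ?_ x hx
    intro y hy
    obtain ⟨⟨n, ζ, rfl⟩, hyM⟩ := hy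
    refine Submodule.subset_span ?_
    exact ⟨⟨_, ζ, D.shift_mono j n ζ⟩, hMinv j _ hyM⟩
  have hFN : F ⊆ ((Submodule.span ℂ G).topologicalClosure : Set H) := by
    intro f hf
    exact Submodule.le_topologicalClosure _
      (Submodule.subset_span ⟨hFmono f hf, hFM hf⟩)
  have hMN : M = (Submodule.span ℂ G).topologicalClosure :=
    le_antisymm
      (hFmin _ (Submodule.isClosed_topologicalClosure _) hNinv hFN) hNM
  have part1 : ∀ x ∈ M, (ContinuousLinearMap.adjoint (D.S k) * D.S k) x ∈ M := by
    intro x hx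
    rw [hMN] at hx ⊢
    refine mapsTo_topologicalClosure_span _ G ?_ x hx
    intro y hy
    obtain ⟨⟨n, ζ, rfl⟩, hyM⟩ := hy
    rw [ContinuousLinearMap.mul_apply, adjoint_shift_apply D k n ζ]
    exact Submodule.smul_mem _ _ (Submodule.subset_span ⟨⟨n, ζ, rfl⟩, hyM⟩)
  refine ⟨part1, ?_⟩
  intro x hx
  have hker : (M.map (D.S k : H →ₗ[ℂ] H) : Set H) ⊆
      {y | ((1 - orthProjCLM M) ∘L ContinuousLinearMap.adjoint (D.S k)) y = 0} := by
    rintro _ ⟨m, hm, rfl⟩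
    have hw : ContinuousLinearMap.adjoint (D.S k) (D.S k m) ∈ M := part1 m hm
    simp only [Set.mem_setOf_eq, ContinuousLinearMap.comp_apply,
      ContinuousLinearMap.sub_apply, ContinuousLinearMap.one_apply]
    rw [orthProjCLM, dif_pos hMclosed]
    haveI : CompleteSpace M := hMclosed.completeSpace_coe
    have hp : (M.orthogonalProjection (ContinuousLinearMap.adjoint (D.S k) (D.S k m)) : H) =
        ContinuousLinearMap.adjoint (D.S k) (D.S k m) :=
      Submodule.starProjection_eq_self_iff.mpr hw
    simp only [ContinuousLinearMap.comp_apply, Submodule.subtypeL_apply, ContinuousLinearMap.coe_coe, hp, sub_self]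
  have hclosed : IsClosed
      {y : H | ((1 - orthProjCLM M) ∘L ContinuousLinearMap.adjoint (D.S k)) y = 0} :=
    isClosed_eq (((1 - orthProjCLM M) ∘L ContinuousLinearMap.adjoint (D.S k)).continuous)
      continuous_const
  have hx' : x ∈ closure ((M.map (D.S k : H →ₗ[ℂ] H)) : Set H) := by
    rwa [← Submodule.topologicalClosure_coe]
  exact closure_minimal hker hclosed hx'

end Arveson
end
end

section
/- Let E = ℂ^r and let M ⊆ H²(ℂ^d) ⊗ E be a closed invariant subspace for the d-shift generated by a set of monomials. Then there exists a positive integer q such that M ⊖ S_1M is contained in the closed span of all monomials z_1^{n_1}z_2^{n_2}⋯z_d^{n_d} ⊗ ζ with n ∈ ℕ^d, n_1 ≤ q, and ζ ∈ E. -/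
open scoped ENNReal

noncomputable section

set_option synthInstance.maxHeartbeats 400000
set_option maxHeartbeats 1000000

namespace Arveson

variable {d : ℕ} {E : Type*} [NormedAddCommGroup E] [InnerProductSpace ℂ E]
  {H₀ : Type*} [NormedAddCommGroup H₀] [InnerProductSpace ℂ H₀]

section Combinatorics

variable {V : Type*} [AddCommGroup V] [Module ℂ V]

lemma nat_subseq (g : ℕ → ℕ) : ∃ φ : ℕ → ℕ, StrictMono φ ∧ Monotone (g ∘ φ) := by
  have h : (Set.univ : Set ℕ).IsPWO := (Set.isWF_univ_iff.2 inferInstance).isPWO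
  obtain ⟨e, he⟩ := h.exists_monotone_subseq (f := g) (fun n => Set.mem_univ _)
  exact ⟨e, e.strictMono, he⟩

lemma pi_subseq {d : ℕ} (g : ℕ → Fin d → ℕ) :
    ∃ φ : ℕ → ℕ, StrictMono φ ∧ ∀ i, Monotone fun t => g (φ t) i := by
  suffices h : ∀ s : Finset (Fin d), ∃ φ : ℕ → ℕ, StrictMono φ ∧
      ∀ i ∈ s, Monotone fun t => g (φ t) i by
    obtain ⟨φ, h1, h2⟩ := h Finset.univ
    exact ⟨φ, h1, fun i => h2 i (Finset.mem_univ i)⟩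
  intro s
  induction s using Finset.induction with
  | empty => exact ⟨id, strictMono_id, by simp⟩
  | @insert a s _ ih =>
    obtain ⟨φ, h1, h2⟩ := ih
    obtain ⟨ψ, hψ1, hψ2⟩ := nat_subseq (fun t => g (φ t) a)
    refine ⟨φ ∘ ψ, h1.comp hψ1, ?_⟩
    intro i hi
    rcases Finset.mem_insert.1 hi with rfl | hi
    · exact hψ2
    · exact (h2 i hi).comp hψ1.monotone

/-- span of the coefficient vectors of generators with exponent `≤ m`. -/
def Gspan {d : ℕ} (P : Set ((Fin d → ℕ) × V)) (m : Fin d → ℕ) : Submodule ℂ V :=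
  Submodule.span ℂ {η | ∃ p ∈ P, p.2 = η ∧ p.1 ≤ m}

lemma Gspan_mono {d : ℕ} (P : Set ((Fin d → ℕ) × V)) {m m' : Fin d → ℕ} (h : m ≤ m') :
    Gspan P m ≤ Gspan P m' := by
  apply Submodule.span_mono
  rintro η ⟨p, hp, rfl, hle⟩
  exact ⟨p, hp, rfl, le_trans hle h⟩

lemma exists_bound {d : ℕ} [FiniteDimensional ℂ V] (k0 : Fin d)
    (P : Set ((Fin d → ℕ) × V)) :
    ∃ q : ℕ, 0 < q ∧ ∀ m : Fin d → ℕ, q < m k0 →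
      Gspan P m ≤ Gspan P (Function.update m k0 (m k0 - 1)) := by
  have key : ∃ q0 : ℕ, ∀ p ∈ P,
      p.2 ∉ Gspan P (Function.update p.1 k0 (p.1 k0 - 1)) → p.1 k0 ≤ q0 := by
    by_contra hcon
    push_neg at hcon
    choose c hc1 hc2 hc3 using hcon
    set f : ℕ → (Fin d → ℕ) × V := fun t => Nat.rec (c 0) (fun _ p => c (p.1 k0)) t with hf
    have hfP : ∀ t, f t ∈ P := by
      intro t; cases t with
      | zero => exact hc1 0
      | succ t => exact hc1 _
    have hfbad : ∀ t, (f t).2 ∉ Gspan P (Function.update (f t).1 k0 ((f t).1 k0 - 1)) := by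
      intro t; cases t with
      | zero => exact hc2 0
      | succ t => exact hc2 _
    have hfstrict : StrictMono (fun t => (f t).1 k0) := by
      apply strictMono_nat_of_lt_succ
      intro t
      exact hc3 ((f t).1 k0)
    obtain ⟨φ, hφ, hmono⟩ := pi_subseq (fun t => (f t).1)
    set v : ℕ → V := fun t => (f (φ t)).2 with hv
    have hstep : ∀ t : ℕ, Submodule.span ℂ (v '' {s | s < t}) ≤
        Gspan P (Function.update (f (φ t)).1 k0 ((f (φ t)).1 k0 - 1)) := by
      intro t
      apply Submodule.span_le.2
      rintro η ⟨s, hs, rfl⟩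
      apply Submodule.subset_span
      refine ⟨f (φ s), hfP _, rfl, ?_⟩
      intro i
      rcases eq_or_ne i k0 with rfl | hne
      · rw [Function.update_self]
        have h : (f (φ s)).1 i < (f (φ t)).1 i := hfstrict (hφ hs)
        show (f (φ s)).1 i ≤ (f (φ t)).1 i - 1
        omega
      · rw [Function.update_of_ne hne]
        exact hmono i (le_of_lt hs)
    have hnot : ∀ t : ℕ, v t ∉ Submodule.span ℂ (v '' {s | s < t}) := by
      intro t ht
      exact hfbad (φ t) (hstep t ht)
    set W : ℕ → Submodule ℂ V := fun t => Submodule.span ℂ (v '' {s | s < t}) with hW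
    have hchain : ∀ t : ℕ, W t < W (t + 1) := by
      intro t
      refine lt_of_le_of_ne (Submodule.span_mono (Set.image_mono ?_)) ?_
      · intro s hs; exact lt_trans hs (Nat.lt_succ_self t)
      · intro heq
        apply hnot t
        rw [show Submodule.span ℂ (v '' {s | s < t}) = W t from rfl, heq]
        exact Submodule.subset_span ⟨t, Nat.lt_succ_self t, rfl⟩
    have hrank : ∀ t : ℕ, t ≤ Module.finrank ℂ (W t) := by
      intro t
      induction t with
      | zero => exact Nat.zero_le _
      | succ t ih =>
        have := Submodule.finrank_lt_finrank_of_lt (hchain t)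
        omega
    have h1 := hrank (Module.finrank ℂ V + 1)
    have h2 := Submodule.finrank_le (W (Module.finrank ℂ V + 1))
    omega
  obtain ⟨q0, hq0⟩ := key
  refine ⟨q0 + 1, Nat.succ_pos _, ?_⟩
  intro m hm
  apply Submodule.span_le.2
  rintro η ⟨⟨nn, ζ⟩, hp, rfl, hle⟩
  rcases lt_or_eq_of_le (hle k0) with hlt | heq
  · apply Submodule.subset_span
    refine ⟨⟨nn, ζ⟩, hp, rfl, ?_⟩
    intro i
    rcases eq_or_ne i k0 with rfl | hne
    · rw [Function.update_self]
      have h1 : nn i < m i := hlt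
      show nn i ≤ m i - 1
      omega
    · rw [Function.update_of_ne hne]; exact hle i
  · by_cases hbad : ζ ∈ Gspan P (Function.update nn k0 (nn k0 - 1))
    · refine Gspan_mono P ?_ hbad
      intro i
      rcases eq_or_ne i k0 with rfl | hne
      · rw [Function.update_self, Function.update_self]
        have h1 : nn i = m i := heq
        show nn i - 1 ≤ m i - 1
        omega
      · rw [Function.update_of_ne hne, Function.update_of_ne hne]; exact hle i
    · exfalso
      have h1 : nn k0 ≤ q0 := hq0 ⟨nn, ζ⟩ hp hbad
      have h2 : nn k0 = m k0 := heq
      omega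

end Combinatorics

lemma daWeight_ne_zero {d : ℕ} (n : Fin d → ℕ) : (daWeight n : ℂ) ≠ 0 := by
  simp only [ne_eq, Complex.ofReal_eq_zero]
  exact ne_of_gt (daWeight_pos n)

/-- iterated shifts stay in an invariant subspace -/
lemma mono_mem_of_le (D : DShift d E H₀) {N : Submodule ℂ H₀} (hN : IsInvariant D N)
    (ζ : E) {n m : Fin d → ℕ} (hnm : n ≤ m) (hmem : D.mono n ζ ∈ N) :
    D.mono m ζ ∈ N := by
  have key : ∀ t : ℕ, ∀ n : Fin d → ℕ, (∑ i, (m i - n i)) = t → n ≤ m →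
      D.mono n ζ ∈ N → D.mono m ζ ∈ N := by
    intro t
    induction t with
    | zero =>
      intro n hsum hle hmem
      have : n = m := by
        funext i
        have h0 : m i - n i = 0 := (Finset.sum_eq_zero_iff).1 hsum i (Finset.mem_univ i)
        have h1 : n i ≤ m i := hle i
        omega
      rwa [this] at hmem
    | succ t ih =>
      intro n hsum hle hmem
      have hex : ∃ k, m k - n k ≠ 0 := by
        by_contra hc
        push_neg at hc
        rw [Finset.sum_eq_zero (fun i _ => hc i)] at hsum
        omega
      obtain ⟨k, hk⟩ := hex
      set n' : Fin d → ℕ := fun i => if i = k then n i + 1 else n i with hn'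
      have hmem' : D.mono n' ζ ∈ N := by
        rw [hn', ← D.shift_mono k n ζ]
        exact hN k _ hmem
      have hle' : n' ≤ m := by
        intro i
        rcases eq_or_ne i k with rfl | hne
        · simp only [hn', if_pos rfl]
          omega
        · simp only [hn', if_neg hne]
          exact hle i
      have hsum' : (∑ i, (m i - n' i)) = t := by
        have e1 : ∑ i ∈ Finset.univ.erase k, (m i - n' i) =
            ∑ i ∈ Finset.univ.erase k, (m i - n i) := by
          apply Finset.sum_congr rfl
          intro i hi
          have hne : i ≠ k := (Finset.mem_erase.1 hi).1
          simp [hn', hne]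
        have e2 : (∑ i ∈ Finset.univ.erase k, (m i - n' i)) + (m k - n' k) =
            ∑ i, (m i - n' i) :=
          Finset.sum_erase_add Finset.univ (fun i => (m i - n' i)) (Finset.mem_univ k)
        have e3 : (∑ i ∈ Finset.univ.erase k, (m i - n i)) + (m k - n k) =
            ∑ i, (m i - n i) :=
          Finset.sum_erase_add Finset.univ (fun i => (m i - n i)) (Finset.mem_univ k)
        have e4 : m k - n' k = (m k - n k) - 1 := by
          simp only [hn', if_pos rfl]
          omega
        omega
      exact ih n' hsum' hle' hmem'
  exact key _ n rfl hnm hmem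

section Coeff

variable [FiniteDimensional ℂ E]

local notation "⟪" x ", " y "⟫" => @inner ℂ _ _ x y

/-- the `E`-valued coefficient of `x` at the monomial `z^m`. -/
def coeff (D : DShift d E H₀) (m : Fin d → ℕ) : H₀ →L[ℂ] E :=
  ∑ j, ((daWeight m : ℂ)⁻¹) •
    ((innerSL ℂ (D.mono m (stdOrthonormalBasis ℂ E j))).smulRight (stdOrthonormalBasis ℂ E j))

lemma coeff_apply (D : DShift d E H₀) (m : Fin d → ℕ) (x : H₀) :
    coeff D m x = ∑ j, ((daWeight m : ℂ)⁻¹ * ⟪D.mono m (stdOrthonormalBasis ℂ E j), x⟫) •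
      stdOrthonormalBasis ℂ E j := by
  simp [coeff, ContinuousLinearMap.sum_apply, ContinuousLinearMap.smul_apply,
    ContinuousLinearMap.smulRight_apply, innerSL_apply_apply, smul_smul]

lemma inner_eq_coeff (D : DShift d E H₀) (m : Fin d → ℕ) (η : E) (x : H₀) :
    ⟪D.mono m η, x⟫ = (daWeight m : ℂ) * ⟪η, coeff D m x⟫ := by
  set b := stdOrthonormalBasis ℂ E
  have hrepr : η = ∑ j, ⟪b j, η⟫ • b j := (b.sum_repr' η).symm
  have lhs : ⟪D.mono m η, x⟫ = ∑ j, (starRingEnd ℂ) ⟪b j, η⟫ * ⟪D.mono m (b j), x⟫ := by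
    conv_lhs => rw [hrepr]
    rw [map_sum, sum_inner]
    congr 1
    funext j
    rw [map_smul, inner_smul_left]
  have rhs : ⟪η, coeff D m x⟫ =
      ∑ j, ((daWeight m : ℂ)⁻¹ * ⟪D.mono m (b j), x⟫) * ⟪η, b j⟫ := by
    rw [coeff_apply, inner_sum]
    congr 1
    funext j
    rw [inner_smul_right]
  rw [lhs, rhs, Finset.mul_sum]
  congr 1
  funext j
  rw [← inner_conj_symm (b j) η]
  field_simp [daWeight_ne_zero]
  rw [Complex.conj_conj]
  have hw := daWeight_ne_zero m
  calc _ = inner ℂ ((D.mono m) (b j)) x * inner ℂ η (b j) * ((daWeight m : ℂ) * (daWeight m : ℂ)⁻¹) := by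
        rw [mul_inv_cancel₀ hw]; ring
    _ = _ := by ring

lemma coeff_mono (D : DShift d E H₀) (m n : Fin d → ℕ) (ζ : E) :
    coeff D m (D.mono n ζ) = if n = m then ζ else 0 := by
  set b := stdOrthonormalBasis ℂ E
  rw [coeff_apply]
  rcases eq_or_ne n m with rfl | hne
  · simp only [if_pos rfl]
    have : ∀ j, ((daWeight n : ℂ)⁻¹ * ⟪D.mono n (b j), D.mono n ζ⟫) • b j
        = ⟪b j, ζ⟫ • b j := by
      intro j
      rw [D.inner_mono, if_pos rfl, ← mul_assoc, inv_mul_cancel₀ (daWeight_ne_zero n), one_mul]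
    rw [Finset.sum_congr rfl (fun j _ => this j)]
    exact b.sum_repr' ζ
  · rw [if_neg hne]
    apply Finset.sum_eq_zero
    intro j _
    rw [D.inner_mono, if_neg (fun h => hne h.symm)]
    simp

end Coeff
/-- Let `M ⊆ H²(ℂ^d) ⊗ ℂ^r` be a closed invariant subspace for the
`d`-shift generated by monomials.  Then there is a positive integer `q` such that
`M ⊖ S₁M` is contained in the closed span of the monomials `z^n ⊗ ζ` with `n₁ ≤ q`. -/
theorem statement8 {H : Type*} [NormedAddCommGroup H] [InnerProductSpace ℂ H]
    [CompleteSpace H] (d r : ℕ) (hd : 0 < d) (hr : 0 < r)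
    (D : DShift d (EuclideanSpace ℂ (Fin r)) H)
    (M : Submodule ℂ H) (hM : IsMonomialGenerated D M) :
    ∃ q : ℕ, 0 < q ∧
      M ⊓ ((M.map (D.S ⟨0, hd⟩ : H →ₗ[ℂ] H)).topologicalClosure)ᗮ ≤
        (Submodule.span ℂ
          {x : H | ∃ n ζ, n ⟨0, hd⟩ ≤ q ∧ x = D.mono n ζ}).topologicalClosure := by
  obtain ⟨hMc, hMi, F, hF, hFM, hmin⟩ := hM
  set k0 : Fin d := ⟨0, hd⟩ with hk0
  set P : Set ((Fin d → ℕ) × EuclideanSpace ℂ (Fin r)) := {p | D.mono p.1 p.2 ∈ F} with hPdef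
  obtain ⟨q, hq, hGq⟩ := exists_bound k0 P
  refine ⟨q, hq, ?_⟩
  rintro x ⟨hxM, hxO⟩
  -- the set of all monomial multiples of the generators
  set T : Set H := {y | ∃ p ∈ P, ∃ m : Fin d → ℕ, p.1 ≤ m ∧ y = D.mono m p.2} with hTdef
  -- M is contained in the closed span of T
  have hMT : M ≤ (Submodule.span ℂ T).topologicalClosure := by
    apply hmin
    · exact Submodule.isClosed_topologicalClosure _
    · intro k y hy
      have hmap : (Submodule.span ℂ T).map (D.S k : H →ₗ[ℂ] H) ≤ Submodule.span ℂ T := by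
        rw [Submodule.map_span]
        apply Submodule.span_le.2
        rintro _ ⟨y, ⟨⟨nn, ζζ⟩, hp, m, hm, rfl⟩, rfl⟩
        have heq : (D.S k : H →ₗ[ℂ] H) (D.mono m ζζ) =
            D.mono (fun i => if i = k then m i + 1 else m i) ζζ := D.shift_mono k m ζζ
        rw [heq]
        refine Submodule.subset_span ⟨⟨nn, ζζ⟩, hp, _, ?_, rfl⟩
        intro i
        have h1 : nn i ≤ m i := hm i
        show nn i ≤ if i = k then m i + 1 else m i
        split <;> omega
      have hmt : Set.MapsTo (D.S k) (Submodule.span ℂ T : Set H)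
          (Submodule.span ℂ T : Set H) := fun z hz => hmap ⟨z, hz, rfl⟩
      have hcl := hmt.closure (D.S k).continuous
      exact hcl hy
    · intro f hf
      obtain ⟨n, ζ, rfl⟩ := hF f hf
      have hpP : (n, ζ) ∈ P := hf
      exact Submodule.le_topologicalClosure _
        (Submodule.subset_span ⟨(n, ζ), hpP, n, le_refl n, rfl⟩)
  -- key step: coefficients of x at exponents with large first coordinate vanish
  have key : ∀ m : Fin d → ℕ, q < m k0 → coeff D m x = 0 := by
    intro m hm
    have h1 : coeff D m x ∈ Gspan P m := by
      have hxT : x ∈ closure (Submodule.span ℂ T : Set H) := hMT hxM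
      have hmt : Set.MapsTo (coeff D m) (Submodule.span ℂ T : Set H) (Gspan P m : Set _) := by
        intro z hz
        induction hz using Submodule.span_induction with
        | mem z hz =>
          obtain ⟨p, hp, m', hm', rfl⟩ := hz
          rw [coeff_mono]
          rcases eq_or_ne m' m with rfl | hne
          · rw [if_pos rfl]
            exact Submodule.subset_span ⟨p, hp, rfl, hm'⟩
          · rw [if_neg hne]
            exact Submodule.zero_mem _
        | zero => rw [map_zero]; exact Submodule.zero_mem _
        | add a b _ _ ha hb => rw [map_add]; exact Submodule.add_mem _ ha hb
        | smul c a _ ha => rw [map_smul]; exact Submodule.smul_mem _ c ha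
      have := hmt.closure (coeff D m).continuous hxT
      rwa [IsClosed.closure_eq (Submodule.closed_of_finiteDimensional _)] at this
    have h2 : coeff D m x ∈ Gspan P (Function.update m k0 (m k0 - 1)) := hGq m hm h1
    have h3 : ∀ η ∈ Gspan P (Function.update m k0 (m k0 - 1)),
        (inner ℂ η (coeff D m x) : ℂ) = 0 := by
      intro η hη
      induction hη using Submodule.span_induction with
      | mem η hη =>
        obtain ⟨p, hp, rfl, hle⟩ := hη
        have hy : D.mono m p.2 ∈ M.map (D.S k0 : H →ₗ[ℂ] H) := by
          apply Submodule.mem_map.2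
          refine ⟨D.mono (Function.update m k0 (m k0 - 1)) p.2, ?_, ?_⟩
          · exact mono_mem_of_le D hMi p.2 hle (hFM hp)
          · rw [ContinuousLinearMap.coe_coe, D.shift_mono]
            have harg : (fun i => if i = k0 then Function.update m k0 (m k0 - 1) i + 1
                else Function.update m k0 (m k0 - 1) i) = m := by
              funext i
              rcases eq_or_ne i k0 with rfl | hne
              · rw [if_pos rfl, Function.update_self]
                omega
              · rw [if_neg hne, Function.update_of_ne hne]
            rw [harg]
        have h0 : (inner ℂ (D.mono m p.2) x : ℂ) = 0 :=
          hxO _ (Submodule.le_topologicalClosure _ hy)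
        rw [inner_eq_coeff] at h0
        exact (mul_eq_zero.1 h0).resolve_left (daWeight_ne_zero m)
      | zero => exact inner_zero_left _
      | add a b _ _ ha hb => rw [inner_add_left, ha, hb, add_zero]
      | smul c a _ ha => rw [inner_smul_left, ha, mul_zero]
    exact inner_self_eq_zero.1 (h3 _ h2)
  -- x is orthogonal to all monomials with large first exponent
  have hBperp : ∀ (n : Fin d → ℕ) (ζ : EuclideanSpace ℂ (Fin r)), q < n k0 →
      (inner ℂ (D.mono n ζ) x : ℂ) = 0 := by
    intro n ζ hn
    rw [inner_eq_coeff, key n hn, inner_zero_right, mul_zero]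
  -- conclude by orthogonal decomposition
  set A : Set H := {y : H | ∃ n ζ, n k0 ≤ q ∧ y = D.mono n ζ} with hAdef
  show x ∈ (Submodule.span ℂ A).topologicalClosure
  set KA : Submodule ℂ H := (Submodule.span ℂ A).topologicalClosure with hKA
  have hKAclosed : IsClosed (KA : Set H) := Submodule.isClosed_topologicalClosure _
  haveI : CompleteSpace KA := hKAclosed.completeSpace_coe
  obtain ⟨y, hy, z, hz, hxyz⟩ := KA.exists_add_mem_mem_orthogonal x
  -- y is orthogonal to monomials with large first exponent
  have hyB : ∀ (n : Fin d → ℕ) (ζ : EuclideanSpace ℂ (Fin r)), q < n k0 →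
      (inner ℂ (D.mono n ζ) y : ℂ) = 0 := by
    intro n ζ hn
    have hker : KA ≤ LinearMap.ker ((innerSL ℂ (D.mono n ζ) : H →L[ℂ] ℂ) : H →ₗ[ℂ] ℂ) := by
      apply Submodule.topologicalClosure_minimal
      · apply Submodule.span_le.2
        rintro _ ⟨n', ζ', hn', rfl⟩
        have hne : n ≠ n' := by
          intro hcon
          rw [hcon] at hn
          omega
        simp only [SetLike.mem_coe, LinearMap.mem_ker, ContinuousLinearMap.coe_coe,
          innerSL_apply_apply]
        rw [D.inner_mono, if_neg hne]
      · exact ContinuousLinearMap.isClosed_ker (innerSL ℂ (D.mono n ζ))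
    exact LinearMap.mem_ker.1 (hker hy)
  -- z is orthogonal to everything, hence zero
  have hztot : (⊤ : Submodule ℂ H) ≤ LinearMap.ker ((innerSL ℂ z : H →L[ℂ] ℂ) : H →ₗ[ℂ] ℂ) := by
    rw [← D.total]
    apply Submodule.topologicalClosure_minimal
    · apply Submodule.span_le.2
      rintro _ ⟨n, ζ, rfl⟩
      simp only [SetLike.mem_coe, LinearMap.mem_ker, ContinuousLinearMap.coe_coe,
        innerSL_apply_apply]
      rcases le_or_gt (n k0) q with hle | hlt
      · have hmem : D.mono n ζ ∈ KA := Submodule.le_topologicalClosure _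
          (Submodule.subset_span ⟨n, ζ, hle, rfl⟩)
        have := (Submodule.mem_orthogonal _ z).1 hz _ hmem
        rw [← inner_conj_symm, this, map_zero]
      · have h1 : (inner ℂ (D.mono n ζ) z : ℂ) = 0 := by
          have hx0 := hBperp n ζ hlt
          have hy0 := hyB n ζ hlt
          rw [hxyz, inner_add_right, hy0, zero_add] at hx0
          exact hx0
        rw [← inner_conj_symm, h1, map_zero]
    · exact ContinuousLinearMap.isClosed_ker (innerSL ℂ z)
  have hz0 : z = 0 := by
    have hzk : z ∈ LinearMap.ker ((innerSL ℂ z : H →L[ℂ] ℂ) : H →ₗ[ℂ] ℂ) := hztot (Submodule.mem_top (x := z))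
    have h6 : (inner ℂ z z : ℂ) = 0 := hzk
    exact inner_self_eq_zero.1 h6
  rw [hxyz, hz0, add_zero]
  exact hy

end Arveson
end
end

section
/- Let Ā = (A_1,…,A_d) be a d-contraction on a Hilbert space H, let M be a closed subspace invariant under each A_k with orthogonal projection P, and write P^⊥ = 1 − P. Then for all 1 ≤ j, k ≤ d, the compression C_j = P^⊥A_jP^⊥ of A_j to M^⊥ satisfies, as operators on H, [C_j, C_k^*]P^⊥ = [P, A_k]^*[P, A_j] + P^⊥[A_j, A_k^*]P^⊥. -/
open scoped ENNReal

noncomputable section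

set_option synthInstance.maxHeartbeats 400000
set_option maxHeartbeats 1000000

namespace Arveson

/-- Let `Ā` be a `d`-contraction, `M` a closed invariant subspace with
projection `P`, `P⊥ = 1 − P`, and `C_j = P⊥ A_j P⊥` the compression of `A_j` to `M⊥`.
Then `[C_j, C_k*] P⊥ = [P, A_k]* [P, A_j] + P⊥ [A_j, A_k*] P⊥`, with the left-hand side
read as `P⊥ A_j A_k* P⊥ − P⊥ A_k* P⊥ A_j P⊥`. -/
theorem statement12 {H : Type*} [NormedAddCommGroup H] [InnerProductSpace ℂ H]
    [CompleteSpace H] (d : ℕ) (A : Fin d → (H →L[ℂ] H))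
    (hcomm : ∀ i j, A i * A j = A j * A i)
    (hcontr : ((1 : H →L[ℂ] H) - ∑ k, A k * star (A k)).IsPositive)
    (M : Submodule ℂ H) (hMcl : IsClosed (M : Set H))
    (hInv : ∀ k, ∀ x ∈ M, A k x ∈ M)
    (P : H →L[ℂ] H) (hP : P = orthProjCLM M) (j k : Fin d) :
    (1 - P) * A j * star (A k) * (1 - P) - (1 - P) * star (A k) * (1 - P) * A j * (1 - P) =
      star (P * A k - A k * P) * (P * A j - A j * P) +
        (1 - P) * (A j * star (A k) - star (A k) * A j) * (1 - P) := by
  haveI hMc : CompleteSpace M := hMcl.completeSpace_coe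
  have hPdef : P = M.subtypeL.comp M.orthogonalProjection := by
    rw [hP, orthProjCLM, dif_pos hMcl]
  have hPmem : ∀ x : H, P x ∈ M := by
    intro x; rw [hPdef]; exact (M.orthogonalProjection x).2
  have hPid : ∀ x ∈ M, P x = x := by
    intro x hx; rw [hPdef]
    exact Submodule.starProjection_eq_self_iff.mpr hx
  have hP2 : P * P = P := by
    ext x
    simp only [ContinuousLinearMap.mul_apply]
    exact hPid _ (hPmem x)
  have hPstar : star P = P := by
    rw [hPdef]; exact (isSelfAdjoint_starProjection M).star_eq
  have he : (1 - P) * (A j * P) = 0 := by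
    ext x
    simp only [ContinuousLinearMap.mul_apply, ContinuousLinearMap.sub_apply,
      ContinuousLinearMap.one_apply, ContinuousLinearMap.zero_apply]
    rw [hPid _ (hInv j _ (hPmem x))]
    abel
  set a := A j with ha
  set b := star (A k) with hb
  have hstar : star (P * A k - A k * P) = b * P - P * b := by
    rw [star_sub, star_mul, star_mul, hPstar, ← hb]
  rw [hstar]
  have key : (1 - P) * a * b * (1 - P) - (1 - P) * b * (1 - P) * a * (1 - P)
      - ((b * P - P * b) * (P * a - a * P) + (1 - P) * (a * b - b * a) * (1 - P))
      = -((P * b) * ((1 - P) * (a * P))) + b * (P - P * P) * a := by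
    noncomm_ring
  have key2 : (1 - P) * a * b * (1 - P) - (1 - P) * b * (1 - P) * a * (1 - P)
      - ((b * P - P * b) * (P * a - a * P) + (1 - P) * (a * b - b * a) * (1 - P)) = 0 := by
    have he' : (1 - P) * (a * P) = 0 := he
    rw [key, he', hP2]
    simp
  exact sub_eq_zero.mp key2

end Arveson
end
end
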